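/- Let X be a non-empty compact, locally connected Hausdorff space and φ : X → ℝ continuous. For every (u,v) with u < v, the number of connected components of the sublevel set X_v = {p ∈ X : φ(p) ≤ v} that contain at least one point of X_u = {p ∈ X : φ(p) ≤ u} is finite. -/
import Mathlib


/-- for a size pair `(X, φ)` (X nonempty compact, locally connected,
Hausdorff; φ continuous) and `u < v`, the number of connected components of the sublevel
set `X_v = {φ ≤ v}` containing at least one point of `X_u = {φ ≤ u}` is finite. -/
theorem sizeFunction_finite {X : Type*} [TopologicalSpace X] [CompactSpace X] [T2Space X]
    [LocallyConnectedSpace X] [Nonempty X] {φ : X → ℝ} (hφ : Continuous φ)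
    {u v : ℝ} (huv : u < v) :
    {C : Set ↥{x : X | φ x ≤ v} |
      ∃ p : ↥{x : X | φ x ≤ v}, φ (p : X) ≤ u ∧ C = connectedComponent p}.Finite := by
  set V : Set X := {x : X | φ x ≤ v} with hV
  set U : Set X := {x : X | φ x < v} with hU
  have hUopen : IsOpen U := isOpen_lt hφ continuous_const
  have hK : IsCompact {x : X | φ x ≤ u} :=
    (isClosed_le hφ continuous_const).isCompact
  have hcover : {x : X | φ x ≤ u} ⊆ ⋃ p ∈ {x : X | φ x ≤ u}, connectedComponentIn U p := by
    intro x hx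
    exact Set.mem_biUnion hx
      (mem_connectedComponentIn (show x ∈ U from lt_of_le_of_lt hx huv))
  obtain ⟨t, htsub, htfin, htcover⟩ :=
    hK.elim_finite_subcover_image (fun p _ => hUopen.connectedComponentIn) hcover
  -- the map sending a point q to the component of ⟨q, _⟩ in the subtype V
  set g : X → Set ↥V := fun q =>
    if h : q ∈ V then connectedComponent (⟨q, h⟩ : ↥V) else ∅ with hg
  refine (htfin.image g).subset ?_
  rintro C ⟨p, hpu, rfl⟩
  obtain ⟨q, hqt, hpq⟩ := Set.mem_iUnion₂.mp (htcover (show (p : X) ∈ _ from hpu))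
  have hqU : q ∈ U := connectedComponentIn_nonempty_iff.mp ⟨_, hpq⟩
  have hqV : q ∈ V := show φ q ≤ v from le_of_lt hqU
  refine ⟨q, hqt, ?_⟩
  -- the connected component of q in U is a preconnected subset of V
  set S : Set X := connectedComponentIn U q with hS
  have hSV : S ⊆ V := (connectedComponentIn_subset U q).trans (fun x hx => show φ x ≤ v from le_of_lt hx)
  have hSpre : IsPreconnected S := isPreconnected_connectedComponentIn
  have hpre : IsPreconnected ((Subtype.val : ↥V → X) ⁻¹' S) := by
    rw [← Topology.IsInducing.subtypeVal.isPreconnected_image]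
    have : (Subtype.val : ↥V → X) '' ((Subtype.val : ↥V → X) ⁻¹' S) = S := by
      rw [Subtype.image_preimage_coe]
      exact Set.inter_eq_right.mpr hSV
    rwa [this]
  have hqS : (⟨q, hqV⟩ : ↥V) ∈ (Subtype.val : ↥V → X) ⁻¹' S :=
    mem_connectedComponentIn hqU
  have hpS : p ∈ (Subtype.val : ↥V → X) ⁻¹' S := hpq
  have key : connectedComponent p = connectedComponent (⟨q, hqV⟩ : ↥V) :=
    connectedComponent_eq (hpre.subset_connectedComponent hpS hqS)
  simp only [hg, dif_pos hqV]
  exact key.symm
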